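/- arXiv:2206.02667 — 4 statements merged into one kernel-verified Lean document; each statement's English description precedes it below -/
import Mathlib

section
/- Let x_1,...,x_n and y_1,...,y_m be points in R^d, and let C_x, C_y be the convex hulls of {x_i} and {y_j} respectively. If C_x and C_y intersect, then there do not exist points x̄, ȳ in R^d such that ‖x_i − x̄‖ < ‖x_i − ȳ‖ for all i and ‖y_j − ȳ‖ < ‖y_j − x̄‖ for all j. -/
theorem stmt0 {d n m : ℕ} (x : Fin n → EuclideanSpace ℝ (Fin d))
    (y : Fin m → EuclideanSpace ℝ (Fin d))
    (hinter : (convexHull ℝ (Set.range x) ∩ convexHull ℝ (Set.range y)).Nonempty) :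
    ¬ ∃ (xb yb : EuclideanSpace ℝ (Fin d)),
      (∀ i, ‖x i - xb‖ < ‖x i - yb‖) ∧ (∀ j, ‖y j - yb‖ < ‖y j - xb‖) := by
  rintro ⟨xb, yb, hx, hy⟩
  obtain ⟨p, hpx, hpy⟩ := hinter
  set f : EuclideanSpace ℝ (Fin d) → ℝ := fun v => 2 * (inner ℝ v (yb - xb) : ℝ) with hfdef
  have hf : IsLinearMap ℝ f := by
    constructor
    · intro a b; simp only [hfdef, inner_add_left]; ring
    · intro c a; simp only [hfdef, real_inner_smul_left, smul_eq_mul]; ring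
  have key : ∀ v : EuclideanSpace ℝ (Fin d),
      (‖v - xb‖ < ‖v - yb‖ ↔ f v < ‖yb‖^2 - ‖xb‖^2) := by
    intro v
    have e1 : ‖v - xb‖^2 = ‖v‖^2 - 2*(inner ℝ v xb : ℝ) + ‖xb‖^2 := norm_sub_sq_real v xb
    have e2 : ‖v - yb‖^2 = ‖v‖^2 - 2*(inner ℝ v yb : ℝ) + ‖yb‖^2 := norm_sub_sq_real v yb
    have hfv : f v = 2*(inner ℝ v yb : ℝ) - 2*(inner ℝ v xb : ℝ) := by
      simp only [hfdef, inner_sub_right]; ring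
    constructor
    · intro h; nlinarith [norm_nonneg (v - xb), norm_nonneg (v - yb)]
    · intro h; nlinarith [norm_nonneg (v - xb), norm_nonneg (v - yb)]
  have key2 : ∀ v : EuclideanSpace ℝ (Fin d),
      (‖v - yb‖ < ‖v - xb‖ ↔ ‖yb‖^2 - ‖xb‖^2 < f v) := by
    intro v
    have e1 : ‖v - xb‖^2 = ‖v‖^2 - 2*(inner ℝ v xb : ℝ) + ‖xb‖^2 := norm_sub_sq_real v xb
    have e2 : ‖v - yb‖^2 = ‖v‖^2 - 2*(inner ℝ v yb : ℝ) + ‖yb‖^2 := norm_sub_sq_real v yb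
    have hfv : f v = 2*(inner ℝ v yb : ℝ) - 2*(inner ℝ v xb : ℝ) := by
      simp only [hfdef, inner_sub_right]; ring
    constructor
    · intro h; nlinarith [norm_nonneg (v - xb), norm_nonneg (v - yb)]
    · intro h; nlinarith [norm_nonneg (v - xb), norm_nonneg (v - yb)]
  have hCx : convexHull ℝ (Set.range x) ⊆ {v | f v < ‖yb‖^2 - ‖xb‖^2} :=
    convexHull_min (by rintro _ ⟨i, rfl⟩; exact (key _).mp (hx i)) (convex_halfSpace_lt hf _)
  have hCy : convexHull ℝ (Set.range y) ⊆ {v | ‖yb‖^2 - ‖xb‖^2 < f v} :=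
    convexHull_min (by rintro _ ⟨j, rfl⟩; exact (key2 _).mp (hy j)) (convex_halfSpace_gt hf _)
  have h1 : f p < ‖yb‖^2 - ‖xb‖^2 := hCx hpx
  have h2 : ‖yb‖^2 - ‖xb‖^2 < f p := hCy hpy
  linarith
end

section
/- Suppose for every t the inequalities R̄^learner(α^t, Θ^{t+1}) ≤ R̄^learner(α^t, Θ^t) (componentwise in j, weighted appropriately) and R̄^subpop(α^{t+1}, Θ^{t+1}) ≤ R̄^subpop(α^t, Θ^{t+1}) (componentwise in i) hold. Then the total risk R^total(α^t, Θ^t) = Σ_{i,j} β_i α^t_{ij} R_i(θ^t_j) is non-increasing in t: R^total(α^{t+1}, Θ^{t+1}) ≤ R^total(α^t, Θ^t). -/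
theorem stmt5 {n m d : ℕ} (R : Fin n → EuclideanSpace ℝ (Fin d) → ℝ)
    (β : Fin n → ℝ) (hβ : ∀ i, 0 < β i) (hβsum : ∑ i, β i = 1)
    (α : ℕ → Fin n → Fin m → ℝ) (Θ : ℕ → Fin m → EuclideanSpace ℝ (Fin d))
    (hα : ∀ t i, (∀ j, 0 ≤ α t i j) ∧ ∑ j, α t i j = 1)
    (hlearner : ∀ t j, ∑ i, β i * α t i j * R i (Θ (t+1) j)
        ≤ ∑ i, β i * α t i j * R i (Θ t j))
    (hsubpop : ∀ t i, ∑ j, α (t+1) i j * R i (Θ (t+1) j)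
        ≤ ∑ j, α t i j * R i (Θ (t+1) j)) :
    ∀ t, ∑ i, ∑ j, β i * α (t+1) i j * R i (Θ (t+1) j)
        ≤ ∑ i, ∑ j, β i * α t i j * R i (Θ t j) := by
  intro t
  have h1 : ∑ i, ∑ j, β i * α (t+1) i j * R i (Θ (t+1) j)
      ≤ ∑ i, ∑ j, β i * α t i j * R i (Θ (t+1) j) := by
    apply Finset.sum_le_sum
    intro i _
    have := hsubpop t i
    have hb := (hβ i).le
    calc ∑ j, β i * α (t+1) i j * R i (Θ (t+1) j)
        = β i * ∑ j, α (t+1) i j * R i (Θ (t+1) j) := by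
          rw [Finset.mul_sum]; congr 1; ext j; ring
      _ ≤ β i * ∑ j, α t i j * R i (Θ (t+1) j) := by
          exact mul_le_mul_of_nonneg_left this hb
      _ = ∑ j, β i * α t i j * R i (Θ (t+1) j) := by
          rw [Finset.mul_sum]; congr 1; ext j; ring
  have h2 : ∑ i, ∑ j, β i * α t i j * R i (Θ (t+1) j)
      ≤ ∑ i, ∑ j, β i * α t i j * R i (Θ t j) := by
    rw [Finset.sum_comm, Finset.sum_comm (s := Finset.univ) (t := Finset.univ)
      (f := fun i j => β i * α t i j * R i (Θ t j))]
    exact Finset.sum_le_sum fun j _ => hlearner t j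
  exact h1.trans h2
end

section
/- With quadratic risks R_i(θ) = ‖θ − φ_i‖² on R^d, three subpopulations with weights β_1, β_2, β_3 > 0 summing to 1, and two learners, consider the split market placing {1} with learner 1 and {2,3} with learner 2, with θ_1 = φ_1 and θ_2 = (β_2 φ_2 + β_3 φ_3)/(β_2 + β_3). Then the split-market stability condition — R_2(θ_2) < R_2(θ_1) and R_3(θ_2) < R_3(θ_1) and R_1(θ_1) < R_1(θ_2) — is equivalent (assuming φ_1, φ_2, φ_3 not all equal and φ_1 ∉ {θ_2}) to ‖φ_2 − φ_3‖ < (β_2 + β_3) · min{ ‖φ_2 − φ_1‖/β_3, ‖φ_3 − φ_1‖/β_2 }. -/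
theorem stmt10 {d : ℕ} (φ1 φ2 φ3 : EuclideanSpace ℝ (Fin d)) (β2 β3 : ℝ)
    (hβ2 : 0 < β2) (hβ3 : 0 < β3)
    (h21 : φ2 ≠ φ1) (h31 : φ3 ≠ φ1)
    (θ2 : EuclideanSpace ℝ (Fin d))
    (hθ2 : θ2 = (β2 + β3)⁻¹ • (β2 • φ2 + β3 • φ3))
    (hne : φ1 ≠ θ2) :
    (‖φ2 - θ2‖^2 < ‖φ2 - φ1‖^2 ∧ ‖φ3 - θ2‖^2 < ‖φ3 - φ1‖^2 ∧
      ‖φ1 - φ1‖^2 < ‖φ1 - θ2‖^2)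
    ↔ ‖φ2 - φ3‖ < (β2 + β3) * min (‖φ2 - φ1‖ / β3) (‖φ3 - φ1‖ / β2) := by
  have hs : (0:ℝ) < β2 + β3 := by linarith
  have e2 : φ2 - θ2 = (β3/(β2+β3)) • (φ2 - φ3) := by
    rw [hθ2]; match_scalars <;> field_simp <;> ring
  have e3 : φ3 - θ2 = (β2/(β2+β3)) • (φ3 - φ2) := by
    rw [hθ2]; match_scalars <;> field_simp <;> ring
  have n2 : ‖φ2 - θ2‖ = (β3/(β2+β3)) * ‖φ2 - φ3‖ := by
    rw [e2, norm_smul, Real.norm_eq_abs, abs_of_pos (by positivity)]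
  have n3 : ‖φ3 - θ2‖ = (β2/(β2+β3)) * ‖φ3 - φ2‖ := by
    rw [e3, norm_smul, Real.norm_eq_abs, abs_of_pos (by positivity)]
  have h1 : (0:ℝ) < ‖φ1 - θ2‖ := norm_pos_iff.2 (sub_ne_zero.2 hne)
  have hc : ‖φ3 - φ2‖ = ‖φ2 - φ3‖ := norm_sub_rev _ _
  have nn : (0:ℝ) ≤ ‖φ2 - φ3‖ := norm_nonneg _
  have na : (0:ℝ) ≤ ‖φ2 - φ1‖ := norm_nonneg _
  have nb : (0:ℝ) ≤ ‖φ3 - φ1‖ := norm_nonneg _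
  rw [n2, n3, hc, mul_min_of_nonneg _ _ hs.le, lt_min_iff]
  constructor
  · rintro ⟨ha, hb, -⟩
    have ha' : (β3/(β2+β3)) * ‖φ2 - φ3‖ < ‖φ2 - φ1‖ := by
      nlinarith [mul_pos hβ3 hβ3, sq_nonneg ((β3/(β2+β3)) * ‖φ2 - φ3‖ + ‖φ2 - φ1‖)]
    have hb' : (β2/(β2+β3)) * ‖φ2 - φ3‖ < ‖φ3 - φ1‖ := by
      nlinarith [sq_nonneg ((β2/(β2+β3)) * ‖φ2 - φ3‖ + ‖φ3 - φ1‖)]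
    rw [div_mul_eq_mul_div, div_lt_iff₀ hs] at ha' hb'
    constructor
    · rw [mul_comm (β2+β3), div_mul_eq_mul_div, lt_div_iff₀ hβ3]
      nlinarith
    · rw [mul_comm (β2+β3), div_mul_eq_mul_div, lt_div_iff₀ hβ2]
      nlinarith
  · rintro ⟨ha, hb⟩
    rw [mul_comm (β2+β3), div_mul_eq_mul_div, lt_div_iff₀ hβ3] at ha
    rw [mul_comm (β2+β3), div_mul_eq_mul_div, lt_div_iff₀ hβ2] at hb
    have ha' : (β3/(β2+β3)) * ‖φ2 - φ3‖ < ‖φ2 - φ1‖ := by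
      rw [div_mul_eq_mul_div, div_lt_iff₀ hs, mul_comm β3]; exact ha
    have hb' : (β2/(β2+β3)) * ‖φ2 - φ3‖ < ‖φ3 - φ1‖ := by
      rw [div_mul_eq_mul_div, div_lt_iff₀ hs, mul_comm β2]; exact hb
    have p2 : (0:ℝ) ≤ (β3/(β2+β3)) * ‖φ2 - φ3‖ := by positivity
    have p3 : (0:ℝ) ≤ (β2/(β2+β3)) * ‖φ2 - φ3‖ := by positivity
    exact ⟨pow_lt_pow_left₀ ha' p2 two_ne_zero, pow_lt_pow_left₀ hb' p3 two_ne_zero, by rw [sub_self, norm_zero, zero_pow two_ne_zero]; exact pow_pos h1 2⟩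
end

section
/- Let f : D → D be continuous on D ⊆ R^k, x_eq a fixed point of f, and V : D → R continuous with V(x_eq) = 0, V(x) > 0 for all x ∈ D \ {x_eq}, and V(f(x)) < V(x) for all x ∈ D \ {x_eq}. Then x_eq is asymptotically stable: for every ε > 0 there is δ > 0 such that any trajectory starting within δ of x_eq stays within ε and converges to x_eq. -/
theorem stmt14 {k : ℕ} (D : Set (EuclideanSpace ℝ (Fin k))) (hD : IsOpen D)
    (xeq : EuclideanSpace ℝ (Fin k)) (hxeq : xeq ∈ D)
    (f : EuclideanSpace ℝ (Fin k) → EuclideanSpace ℝ (Fin k))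
    (hf : ContinuousOn f D) (hmaps : Set.MapsTo f D D) (hfix : f xeq = xeq)
    (V : EuclideanSpace ℝ (Fin k) → ℝ) (hVc : ContinuousOn V D)
    (hV0 : V xeq = 0) (hVpos : ∀ x ∈ D, x ≠ xeq → 0 < V x)
    (hVdec : ∀ x ∈ D, x ≠ xeq → V (f x) < V x) :
    ∀ ε > 0, ∃ δ > 0, ∀ x0 ∈ D, dist x0 xeq < δ →
      (∀ t : ℕ, dist (f^[t] x0) xeq < ε) ∧
      Filter.Tendsto (fun t : ℕ => f^[t] x0) Filter.atTop (nhds xeq) := by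
  intro ε hε
  -- choose r with closedBall xeq r ⊆ D and r ≤ ε
  obtain ⟨ρ, hρ, hball⟩ := Metric.isOpen_iff.mp hD xeq hxeq
  set r : ℝ := min ε ρ / 2 with hrdef
  have hr0 : 0 < r := by have := lt_min hε hρ; positivity
  have hrρ : r < ρ := by
    have h1 : min ε ρ ≤ ρ := min_le_right _ _
    have : r ≤ ρ / 2 := by rw [hrdef]; linarith
    linarith
  have hrε : r ≤ ε := by
    have h1 : min ε ρ ≤ ε := min_le_left _ _
    rw [hrdef]; linarith
  have hrD : Metric.closedBall xeq r ⊆ D := fun x hx => by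
    apply hball
    rw [Metric.mem_closedBall] at hx
    rw [Metric.mem_ball]
    linarith
  -- continuity of f at xeq: choose s
  have hfc : ContinuousAt f xeq := hf.continuousAt (hD.mem_nhds hxeq)
  obtain ⟨s0, hs00, hs0f⟩ := Metric.continuousAt_iff.mp hfc r hr0
  set s : ℝ := min (s0 / 2) (r / 2) with hsdef
  have hs0 : 0 < s := by
    apply lt_min <;> positivity
  have hsr : s < r := by
    have : s ≤ r / 2 := min_le_right _ _
    linarith
  have hss0 : s < s0 := by
    have : s ≤ s0 / 2 := min_le_left _ _
    linarith
  have hfs : ∀ x, dist x xeq ≤ s → dist (f x) xeq < r := by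
    intro x hx
    have := hs0f (show dist x xeq < s0 by linarith)
    rwa [hfix] at this
  have hsD : Metric.closedBall xeq s ⊆ D := fun x hx => by
    apply hrD
    rw [Metric.mem_closedBall] at hx ⊢
    linarith
  -- V ≥ 0 on D
  have hVnn : ∀ x ∈ D, 0 ≤ V x := by
    intro x hx
    rcases eq_or_ne x xeq with h | h
    · rw [h, hV0]
    · exact (hVpos x hx h).le
  -- the annulus
  set A : Set (EuclideanSpace ℝ (Fin k)) :=
    Metric.closedBall xeq r ∩ (Metric.ball xeq s)ᶜ with hAdef
  have hAc : IsCompact A :=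
    (isCompact_closedBall xeq r).inter_right Metric.isOpen_ball.isClosed_compl
  have hAD : A ⊆ D := fun x hx => hrD hx.1
  obtain ⟨α, hα0, hαA⟩ : ∃ α > 0, ∀ x ∈ A, α ≤ V x := by
    rcases A.eq_empty_or_nonempty with hA | hA
    · exact ⟨1, one_pos, fun x hx => by rw [hA] at hx; exact absurd hx (Set.notMem_empty x)⟩
    · obtain ⟨z, hzA, hz⟩ := hAc.exists_isMinOn hA (hVc.mono hAD)
      refine ⟨V z, ?_, fun x hx => hz hx⟩
      apply hVpos z (hAD hzA)
      intro h
      have hz2 : z ∈ (Metric.ball xeq s)ᶜ := hzA.2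
      rw [h] at hz2
      exact hz2 (Metric.mem_ball_self hs0)
  -- choose δ from continuity of V at xeq
  have hVcx : ContinuousAt V xeq := hVc.continuousAt (hD.mem_nhds hxeq)
  obtain ⟨δ0, hδ00, hδ0⟩ := Metric.continuousAt_iff.mp hVcx α hα0
  set δ : ℝ := min δ0 s with hδdef
  have hδpos : 0 < δ := lt_min hδ00 hs0
  have hδs : δ ≤ s := min_le_right _ _
  have hδV : ∀ x, dist x xeq < δ → V x < α := by
    intro x hx
    have := hδ0 (lt_of_lt_of_le hx (min_le_left _ _))
    rw [hV0, Real.dist_eq, sub_zero] at this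
    exact lt_of_le_of_lt (le_abs_self _) this
  -- V (f x) ≤ V x on D
  have hVfle : ∀ x ∈ D, V (f x) ≤ V x := by
    intro x hx
    rcases eq_or_ne x xeq with h | h
    · rw [h, hfix]
    · exact (hVdec x hx h).le
  -- the key invariant step
  have key : ∀ x, dist x xeq < s → V x < α → dist (f x) xeq < s ∧ V (f x) < α := by
    intro x hxs hxV
    have hxD : x ∈ D := hsD (Metric.mem_closedBall.mpr hxs.le)
    have hfV : V (f x) < α := lt_of_le_of_lt (hVfle x hxD) hxV
    have hfr : dist (f x) xeq < r := hfs x hxs.le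
    refine ⟨?_, hfV⟩
    by_contra h
    push_neg at h
    have hmem : f x ∈ A :=
      ⟨Metric.mem_closedBall.mpr hfr.le,
        fun hc => absurd (Metric.mem_ball.mp hc) (not_lt.mpr h)⟩
    exact absurd (hαA _ hmem) (not_le.mpr hfV)
  refine ⟨δ, hδpos, fun x0 hx0D hx0δ => ?_⟩
  -- trajectory invariant
  have traj : ∀ t : ℕ, dist (f^[t] x0) xeq < s ∧ V (f^[t] x0) < α := by
    intro t
    induction t with
    | zero => exact ⟨lt_of_lt_of_le hx0δ hδs, hδV x0 hx0δ⟩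
    | succ n ih =>
      rw [Function.iterate_succ_apply']
      exact key _ ih.1 ih.2
  have trajD : ∀ t : ℕ, f^[t] x0 ∈ D := fun t =>
    hsD (Metric.mem_closedBall.mpr (traj t).1.le)
  constructor
  · intro t
    have := (traj t).1
    linarith
  -- convergence
  set a : ℕ → ℝ := fun t => V (f^[t] x0) with hadef
  have hsucc : ∀ n : ℕ, a (n + 1) ≤ a n := by
    intro n
    show V (f^[n + 1] x0) ≤ V (f^[n] x0)
    rw [Function.iterate_succ_apply']
    exact hVfle _ (trajD n)
  have hanti : Antitone a := antitone_nat_of_succ_le hsucc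
  have hann : ∀ t, 0 ≤ a t := fun t => hVnn _ (trajD t)
  have hbdd : BddBelow (Set.range a) := ⟨0, fun y ⟨t, ht⟩ => ht ▸ hann t⟩
  set c : ℝ := ⨅ t, a t with hcdef
  have htend : Filter.Tendsto a Filter.atTop (nhds c) := tendsto_atTop_ciInf hanti hbdd
  have hac : ∀ t, c ≤ a t := fun t => ciInf_le hbdd t
  have hc0 : 0 ≤ c := le_ciInf hann
  -- show c = 0
  have hceq : c = 0 := by
    by_contra hc
    have hcpos : 0 < c := lt_of_le_of_ne hc0 (Ne.symm hc)
    set K : Set (EuclideanSpace ℝ (Fin k)) :=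
      Metric.closedBall xeq s ∩ V ⁻¹' (Set.Ici c) with hKdef
    have hKD : K ⊆ D := fun x hx => hsD hx.1
    have hKclosed : IsClosed K :=
      (hVc.mono hsD).preimage_isClosed_of_isClosed Metric.isClosed_closedBall isClosed_Ici
    have hKc : IsCompact K :=
      (isCompact_closedBall xeq s).of_isClosed_subset hKclosed Set.inter_subset_left
    have hKne : K.Nonempty :=
      ⟨x0, by
        refine ⟨Metric.mem_closedBall.mpr ?_, hac 0⟩
        have := (traj 0).1
        simpa using this.le⟩
    have hKxeq : ∀ x ∈ K, x ≠ xeq := by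
      intro x hx h
      have : c ≤ V x := hx.2
      rw [h, hV0] at this
      linarith
    have hgc : ContinuousOn (fun x => V x - V (f x)) D :=
      hVc.sub (hVc.comp hf hmaps)
    obtain ⟨z, hzK, hz⟩ := hKc.exists_isMinOn hKne (hgc.mono hKD)
    set μ : ℝ := V z - V (f z) with hμdef
    have hμ0 : 0 < μ := by
      have := hVdec z (hKD hzK) (hKxeq z hzK)
      rw [hμdef]; linarith
    have hstep : ∀ t, a (t + 1) ≤ a t - μ := by
      intro t
      have hmem : f^[t] x0 ∈ K :=
        ⟨Metric.mem_closedBall.mpr (traj t).1.le, hac t⟩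
      have := hz hmem
      show V (f^[t + 1] x0) ≤ V (f^[t] x0) - μ
      rw [Function.iterate_succ_apply']
      simp only [Set.mem_setOf_eq] at this
      linarith [this]
    have htend2 : Filter.Tendsto (fun t => a (t + 1)) Filter.atTop (nhds c) :=
      htend.comp (Filter.tendsto_add_atTop_nat 1)
    have htend3 : Filter.Tendsto (fun t => a t - μ) Filter.atTop (nhds (c - μ)) :=
      htend.sub_const μ
    have : c ≤ c - μ :=
      le_of_tendsto_of_tendsto' htend2 htend3 hstep
    linarith
  rw [hceq] at htend
  -- final convergence to xeq
  rw [Metric.tendsto_atTop]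
  intro η hη
  set Kη : Set (EuclideanSpace ℝ (Fin k)) :=
    Metric.closedBall xeq s ∩ (Metric.ball xeq η)ᶜ with hKηdef
  rcases Kη.eq_empty_or_nonempty with hKη | hKη
  · refine ⟨0, fun t _ => ?_⟩
    by_contra h
    push_neg at h
    have : f^[t] x0 ∈ Kη :=
      ⟨Metric.mem_closedBall.mpr (traj t).1.le,
        fun hc => absurd (Metric.mem_ball.mp hc) (not_lt.mpr h)⟩
    rw [hKη] at this
    exact this
  · have hKηc : IsCompact Kη :=
      (isCompact_closedBall xeq s).inter_right Metric.isOpen_ball.isClosed_compl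
    have hKηD : Kη ⊆ D := fun x hx => hsD hx.1
    obtain ⟨z, hzK, hz⟩ := hKηc.exists_isMinOn hKη (hVc.mono hKηD)
    have hβ0 : 0 < V z := by
      apply hVpos z (hKηD hzK)
      intro h
      have hz2 : z ∈ (Metric.ball xeq η)ᶜ := hzK.2
      rw [h] at hz2
      exact hz2 (Metric.mem_ball_self hη)
    have hev : ∀ᶠ t in Filter.atTop, a t < V z := htend.eventually_lt_const hβ0
    obtain ⟨N, hN⟩ := hev.exists_forall_of_atTop
    refine ⟨N, fun t ht => ?_⟩
    by_contra h
    push_neg at h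
    have hmem : f^[t] x0 ∈ Kη :=
      ⟨Metric.mem_closedBall.mpr (traj t).1.le,
        fun hc => absurd (Metric.mem_ball.mp hc) (not_lt.mpr h)⟩
    exact absurd (hz hmem) (not_le.mpr (hN t ht))
end
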